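/- Let $k$ be a field, $T = k[[t]]$, $\widehat{R}_P = k[[t, x^{-1}]]$ and $\widehat{R}_{\mathfrak{p}} = k((x^{-1}))[[t]]$. Set $V = \operatorname{Frac}(\widehat{R}_P) \cap \widehat{R}_{\mathfrak{p}}$ and let $W = F_U \cap \widehat{R}_{\mathfrak{p}}$ where $F_U = k(x)((t)) = \operatorname{Frac}(k[x][[t]])$. Then every element $f \in \widehat{R}_{\mathfrak{p}}$ can be written as $f = f_1 + f_2$ with $f_1 \in V$ and $f_2 \in W$; that is, $V + W = \widehat{R}_{\mathfrak{p}}$. -/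

import Mathlib

noncomputable section

/- STATEMENT 5: with `t` the power series variable and `X = x⁻¹` the Laurent series
variable, we work inside `F_𝔭 = k((x⁻¹))((t))`, containing `R̂_𝔭 = k((x⁻¹))[[t]]`.
`V = Frac(k[[t,x⁻¹]]) ∩ R̂_𝔭` and `W = k(x)((t)) ∩ R̂_𝔭 = Frac(k[x][[t]]) ∩ R̂_𝔭`.
Then `V + W = R̂_𝔭`. -/

variable (k : Type) [Field k]

/-- `R̂_𝔭 = k((x⁻¹))[[t]] ↪ F_𝔭 = k((x⁻¹))((t))`. -/
def iotaP : PowerSeries (LaurentSeries k) →+* LaurentSeries (LaurentSeries k) :=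
  HahnSeries.ofPowerSeries ℤ (LaurentSeries k)

/-- `R̂_P = k[[t, x⁻¹]] = k[[x⁻¹]][[t]] ↪ F_𝔭`. -/
def phiA : PowerSeries (PowerSeries k) →+* LaurentSeries (LaurentSeries k) :=
  (iotaP k).comp (PowerSeries.map (HahnSeries.ofPowerSeries ℤ k))

/-- `k[x] ↪ k((x⁻¹))`, sending `x` to the inverse of the Laurent series variable. -/
def psiPoly : Polynomial k →+* LaurentSeries k :=
  Polynomial.eval₂RingHom (algebraMap k (LaurentSeries k))
    (HahnSeries.single (1 : ℤ) (1 : k))⁻¹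

/-- `k[x][[t]] ↪ F_𝔭`. -/
def phiB : PowerSeries (Polynomial k) →+* LaurentSeries (LaurentSeries k) :=
  (iotaP k).comp (PowerSeries.map (psiPoly k))

namespace Stmt5Aux

variable {k : Type} [Field k]

lemma ofPS_coeff_neg (P : PowerSeries k) {n : ℤ} (hn : n < 0) :
    (HahnSeries.ofPowerSeries ℤ k P).coeff n = 0 := by
  rw [HahnSeries.ofPowerSeries_apply]
  apply HahnSeries.embDomain_notin_range
  rintro ⟨m, hm⟩
  simp only [Nat.castOrderEmbedding_apply] at hm
  omega

lemma negSupp_finite (L : LaurentSeries k) : {n : ℤ | n < 0 ∧ L.coeff n ≠ 0}.Finite := by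
  apply Set.Finite.subset (Set.finite_Icc L.order (-1))
  rintro n ⟨h1, h2⟩
  refine ⟨?_, by omega⟩
  by_contra h3
  push_neg at h3
  exact h2 (HahnSeries.coeff_eq_zero_of_lt_order h3)

/-- The positive-exponent (power series) part of a Laurent series. -/
def posPart (L : LaurentSeries k) : PowerSeries k := PowerSeries.mk fun n => L.coeff (n : ℤ)

/-- The negative-exponent part of a Laurent series, as a polynomial in `x = X⁻¹`. -/
def negPart (L : LaurentSeries k) : Polynomial k :=
  ∑ n ∈ (negSupp_finite L).toFinset, Polynomial.C (L.coeff n) * Polynomial.X ^ (-n).toNat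

lemma single_one_inv :
    (HahnSeries.single (1 : ℤ) (1 : k))⁻¹ = HahnSeries.single (-1 : ℤ) (1 : k) := by
  refine inv_eq_of_mul_eq_one_right ?_
  rw [HahnSeries.single_mul_single, add_neg_cancel, one_mul]
  exact HahnSeries.single_zero_one

lemma psiPoly_monomial (c : k) (m : ℕ) :
    psiPoly k (Polynomial.C c * Polynomial.X ^ m) =
      HahnSeries.single (-(m : ℤ)) c := by
  rw [map_mul, map_pow]
  have hX : psiPoly k Polynomial.X = HahnSeries.single (-1 : ℤ) (1 : k) := by
    simp [psiPoly, single_one_inv]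
  have hC : psiPoly k (Polynomial.C c) = HahnSeries.single (0 : ℤ) c := by
    rw [psiPoly, Polynomial.coe_eval₂RingHom, Polynomial.eval₂_C]
    rw [HahnSeries.algebraMap_apply']
    have h2 : algebraMap k (PowerSeries k) c = PowerSeries.C c := rfl
    rw [h2, HahnSeries.ofPowerSeries_C, HahnSeries.C_apply]
  rw [hX, hC, HahnSeries.single_pow, HahnSeries.single_mul_single, one_pow, mul_one]
  norm_num

lemma psiPoly_negPart (L : LaurentSeries k) :
    psiPoly k (negPart L) =
      ∑ n ∈ (negSupp_finite L).toFinset, HahnSeries.single n (L.coeff n) := by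
  rw [negPart, map_sum]
  apply Finset.sum_congr rfl
  intro n hn
  rw [Set.Finite.mem_toFinset, Set.mem_setOf_eq] at hn
  rw [psiPoly_monomial]
  have h : (((-n).toNat : ℤ)) = -n := Int.toNat_of_nonneg (by omega)
  rw [h, neg_neg]

lemma split (L : LaurentSeries k) :
    HahnSeries.ofPowerSeries ℤ k (posPart L) + psiPoly k (negPart L) = L := by
  ext m
  rw [HahnSeries.coeff_add, psiPoly_negPart]
  have hs : (∑ n ∈ (negSupp_finite L).toFinset,
      HahnSeries.single n (L.coeff n)).coeff m =
      ∑ n ∈ (negSupp_finite L).toFinset, (HahnSeries.single n (L.coeff n)).coeff m :=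
    map_sum (HahnSeries.coeff.addMonoidHom m) _ _
  rw [hs]
  rcases lt_or_ge m 0 with hm | hm
  · rw [ofPS_coeff_neg _ hm, zero_add]
    rw [Finset.sum_eq_single m
      (fun b _ hbm => HahnSeries.coeff_single_of_ne (Ne.symm hbm))
      (fun hms => by
        rw [HahnSeries.coeff_single_same]
        by_contra h
        exact hms (by rw [Set.Finite.mem_toFinset]; exact ⟨hm, h⟩)),
      HahnSeries.coeff_single_same]
  · have hz : ∑ n ∈ (negSupp_finite L).toFinset,
        (HahnSeries.single n (L.coeff n)).coeff m = 0 := by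
      apply Finset.sum_eq_zero
      intro n hn
      rw [Set.Finite.mem_toFinset, Set.mem_setOf_eq] at hn
      exact HahnSeries.coeff_single_of_ne (by omega)
    rw [hz, add_zero]
    lift m to ℕ using hm
    rw [HahnSeries.ofPowerSeries_apply_coeff, posPart, PowerSeries.coeff_mk]

end Stmt5Aux

theorem stmt_5 :
    ∀ g : PowerSeries (LaurentSeries k),
      ∃ f1 f2 : LaurentSeries (LaurentSeries k),
        -- f1 ∈ V = Frac(R̂_P) ∩ R̂_𝔭 :
        (∃ a b : PowerSeries (PowerSeries k), phiA k b ≠ 0 ∧ f1 * phiA k b = phiA k a) ∧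
        (∃ h : PowerSeries (LaurentSeries k), f1 = iotaP k h) ∧
        -- f2 ∈ W = Frac(k[x][[t]]) ∩ R̂_𝔭 :
        (∃ a b : PowerSeries (Polynomial k), phiB k b ≠ 0 ∧ f2 * phiB k b = phiB k a) ∧
        (∃ h : PowerSeries (LaurentSeries k), f2 = iotaP k h) ∧
        -- f = f1 + f2 :
        iotaP k g = f1 + f2 := by
  intro g
  set hA : PowerSeries (PowerSeries k) :=
    PowerSeries.mk fun i => Stmt5Aux.posPart (PowerSeries.coeff i g) with hAdef
  set hB : PowerSeries (Polynomial k) :=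
    PowerSeries.mk fun i => Stmt5Aux.negPart (PowerSeries.coeff i g) with hBdef
  refine ⟨phiA k hA, phiB k hB,
    ⟨hA * 1, 1, by simp, (map_mul _ _ _).symm⟩,
    ⟨PowerSeries.map (HahnSeries.ofPowerSeries ℤ k) hA, rfl⟩,
    ⟨hB * 1, 1, by simp, (map_mul _ _ _).symm⟩,
    ⟨PowerSeries.map (psiPoly k) hB, rfl⟩, ?_⟩
  have hg : g = PowerSeries.map (HahnSeries.ofPowerSeries ℤ k) hA
      + PowerSeries.map (psiPoly k) hB := by
    ext i
    rw [map_add, PowerSeries.coeff_map, PowerSeries.coeff_map, hAdef, hBdef,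
      PowerSeries.coeff_mk, PowerSeries.coeff_mk, Stmt5Aux.split]
  show iotaP k g = iotaP k (PowerSeries.map (HahnSeries.ofPowerSeries ℤ k) hA)
      + iotaP k (PowerSeries.map (psiPoly k) hB)
  rw [hg, map_add]

end
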